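/- arXiv:2203.13713 — 2 statements merged into one kernel-verified Lean document; each statement's English description precedes it below -/
import Mathlib

section
/- For every integer k ≥ 1 and any real numbers x_1, …, x_n ∈ [0,1] with x_1 + ⋯ + x_n = 1, we have p_k(x_1) + ⋯ + p_k(x_n) ≥ n · p_k(1/n). -/
def p (k : ℕ) (x : ℝ) : ℝ :=
  ∑ ℓ ∈ Finset.range k, (Nat.choose (2*k-1) ℓ : ℝ) * x^(2*k-1-ℓ) * (1-x)^ℓ

def A (m : ℕ) (x : ℝ) : ℕ → ℝ
  | 0 => 0
  | (ℓ+1) => ((m.choose ℓ * (m - ℓ) : ℕ) : ℝ) * x^(m-ℓ-1) * (1-x)^ℓ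

lemma term_hasDerivAt (m ℓ : ℕ) (x : ℝ) :
    HasDerivAt (fun y : ℝ => (m.choose ℓ : ℝ) * y^(m-ℓ) * (1-y)^ℓ)
      (A m x (ℓ+1) - A m x ℓ) x := by
  have h1 : HasDerivAt (fun y : ℝ => (m.choose ℓ : ℝ) * y^(m-ℓ))
      ((m.choose ℓ : ℝ) * (((m-ℓ):ℕ) * x^(m-ℓ-1))) x :=
    (hasDerivAt_pow (m-ℓ) x).const_mul _
  have h2 : HasDerivAt (fun y : ℝ => (1-y)^ℓ)
      ((ℓ:ℝ) * (1-x)^(ℓ-1) * (-1)) x :=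
    ((hasDerivAt_id x).const_sub 1).pow ℓ
  have h := h1.mul h2
  refine h.congr_deriv ?_
  symm
  cases ℓ with
  | zero => simp [A]
  | succ j =>
      simp only [A]
      have hc : ((m.choose (j+1) * (j+1) : ℕ) : ℝ) = ((m.choose j * (m - j) : ℕ) : ℝ) := by
        rw [Nat.choose_succ_right_eq]
      push_cast at hc ⊢
      have he : m - (j+1) = m - j - 1 := by omega
      rw [he]
      linear_combination (x^(m-j-1) * (1-x)^j) * hc

lemma p_hasDerivAt (j : ℕ) (x : ℝ) :
    HasDerivAt (p (j+1))
      ((((2*j+1).choose j * (j+1) : ℕ) : ℝ) * (x^j * (1-x)^j)) x := by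
  have hm : 2*(j+1)-1 = 2*j+1 := by omega
  have hsum : HasDerivAt (fun y : ℝ => ∑ ℓ ∈ Finset.range (j+1),
      ((2*j+1).choose ℓ : ℝ) * y^(2*j+1-ℓ) * (1-y)^ℓ)
      (∑ ℓ ∈ Finset.range (j+1), (A (2*j+1) x (ℓ+1) - A (2*j+1) x ℓ)) x := by
    apply HasDerivAt.fun_sum
    intro i _
    exact term_hasDerivAt (2*j+1) i x
  rw [Finset.sum_range_sub (A (2*j+1) x)] at hsum
  have : p (j+1) = fun y : ℝ => ∑ ℓ ∈ Finset.range (j+1),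
      ((2*j+1).choose ℓ : ℝ) * y^(2*j+1-ℓ) * (1-y)^ℓ := by
    funext y
    simp [p, hm]
  rw [this]
  convert hsum using 1
  simp only [A]
  have h1 : 2*j+1-j-1 = j := by omega
  have h2 : 2*j+1-j = j+1 := by omega
  rw [h1, h2]
  ring

lemma prod_pow_mono {a b : ℝ} (ha : 0 ≤ a) (hab : a ≤ b) (hb : b ≤ 1/2) (j : ℕ) :
    a^j * (1-a)^j ≤ b^j * (1-b)^j := by
  rw [← mul_pow, ← mul_pow]
  exact pow_le_pow_left₀ (by nlinarith) (by nlinarith) j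

lemma p_differentiable (j : ℕ) : Differentiable ℝ (p (j+1)) :=
  fun x => (p_hasDerivAt j x).differentiableAt

lemma p_convexOn (j : ℕ) : ConvexOn ℝ (Set.Icc (0:ℝ) (1/2)) (p (j+1)) := by
  apply MonotoneOn.convexOn_of_deriv (convex_Icc _ _)
    ((p_differentiable j).continuous.continuousOn)
    ((p_differentiable j).differentiableOn)
  intro a ha b hb hab
  rw [interior_Icc] at ha hb
  rw [(p_hasDerivAt j a).deriv, (p_hasDerivAt j b).deriv]
  have := prod_pow_mono ha.1.le hab hb.2.le j
  have hc : (0:ℝ) ≤ (((2*j+1).choose j * (j+1) : ℕ) : ℝ) := Nat.cast_nonneg _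
  nlinarith

lemma jensen_p (j : ℕ) {ι : Type*} (t : Finset ι) (ht : t.Nonempty) (z : ι → ℝ)
    (hz : ∀ i ∈ t, z i ∈ Set.Icc (0:ℝ) (1/2)) :
    (t.card : ℝ) * p (j+1) ((∑ i ∈ t, z i) / t.card) ≤ ∑ i ∈ t, p (j+1) (z i) := by
  have hcard : (0:ℝ) < t.card := by exact_mod_cast Finset.card_pos.mpr ht
  have h := (p_convexOn j).map_sum_le (t := t) (w := fun _ => (t.card:ℝ)⁻¹) (p := z)
    (fun i _ => by positivity)
    (by rw [Finset.sum_const, nsmul_eq_mul]; field_simp)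
    hz
  simp only [smul_eq_mul] at h
  rw [← Finset.mul_sum] at h
  have he : (t.card:ℝ)⁻¹ * ∑ i ∈ t, z i = (∑ i ∈ t, z i) / t.card := by
    rw [div_eq_inv_mul]
  rw [he, ← Finset.mul_sum] at h
  calc (t.card : ℝ) * p (j+1) ((∑ i ∈ t, z i) / t.card)
      ≤ (t.card : ℝ) * ((t.card:ℝ)⁻¹ * ∑ i ∈ t, p (j+1) (z i)) := by
        apply mul_le_mul_of_nonneg_left h hcard.le
    _ = ∑ i ∈ t, p (j+1) (z i) := by field_simp

lemma g_hasDerivAt (j : ℕ) (N : ℝ) (hN : 1 ≤ N) (y : ℝ) :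
    HasDerivAt (fun y => p (j+1) y + N * p (j+1) ((1-y)/N))
      ((((2*j+1).choose j * (j+1) : ℕ) : ℝ) * (y^j * (1-y)^j)
        - (((2*j+1).choose j * (j+1) : ℕ) : ℝ)
          * (((1-y)/N)^j * (1-(1-y)/N)^j)) y := by
  have hN0 : N ≠ 0 := by linarith
  have inner : HasDerivAt (fun y : ℝ => (1-y)/N) (-1/N) y :=
    ((hasDerivAt_id y).const_sub 1).div_const N
  have comp : HasDerivAt (fun y : ℝ => p (j+1) ((1-y)/N))
      ((((2*j+1).choose j * (j+1) : ℕ) : ℝ)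
        * (((1-y)/N)^j * (1-(1-y)/N)^j) * (-1/N)) y :=
    (p_hasDerivAt j ((1-y)/N)).comp (h := fun y : ℝ => (1-y)/N) y inner
  have h := (p_hasDerivAt j y).add (comp.const_mul N)
  refine h.congr_deriv ?_
  symm
  field_simp
  ring

lemma g_mono (j : ℕ) (N : ℝ) (hN : 1 ≤ N) :
    MonotoneOn (fun y => p (j+1) y + N * p (j+1) ((1-y)/N)) (Set.Icc (1/2:ℝ) 1) := by
  have hdiff : Differentiable ℝ (fun y => p (j+1) y + N * p (j+1) ((1-y)/N)) :=
    fun y => (g_hasDerivAt j N hN y).differentiableAt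
  apply monotoneOn_of_hasDerivWithinAt_nonneg (convex_Icc _ _)
    hdiff.continuous.continuousOn
    (f' := fun y => (((2*j+1).choose j * (j+1) : ℕ) : ℝ) * (y^j * (1-y)^j)
        - (((2*j+1).choose j * (j+1) : ℕ) : ℝ) * (((1-y)/N)^j * (1-(1-y)/N)^j))
    (fun y _ => (g_hasDerivAt j N hN y).hasDerivWithinAt)
  intro y hy
  rw [interior_Icc] at hy
  obtain ⟨hy1, hy2⟩ := hy
  have h1y : 0 ≤ 1 - y := by linarith
  have hz0 : 0 ≤ (1-y)/N := by positivity
  have hzle : (1-y)/N ≤ 1-y := div_le_self h1y hN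
  have h12 : 1 - y ≤ 1/2 := by linarith
  have key := prod_pow_mono hz0 hzle h12 j
  have hyy : (1-(1-y))^j = y^j := by norm_num
  rw [hyy] at key
  have hc : (0:ℝ) ≤ (((2*j+1).choose j * (j+1) : ℕ) : ℝ) := Nat.cast_nonneg _
  nlinarith

theorem sum_p_ge (k n : ℕ) (hk : 1 ≤ k) (hn : 1 ≤ n) (x : Fin n → ℝ)
    (hx : ∀ i, x i ∈ Set.Icc (0:ℝ) 1) (hsum : ∑ i, x i = 1) :
    (n : ℝ) * p k (1 / n) ≤ ∑ i, p k (x i) := by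
  obtain ⟨j, rfl⟩ : ∃ j, k = j + 1 := ⟨k-1, by omega⟩
  haveI : NeZero n := ⟨by omega⟩
  haveI hne : Nonempty (Fin n) := ⟨⟨0, by omega⟩⟩
  rcases eq_or_lt_of_le hn with h1 | hn2
  · -- n = 1
    obtain rfl := h1.symm
    rw [Fin.sum_univ_one] at hsum ⊢
    simp only [Nat.cast_one, one_mul, div_one]
    rw [hsum]
  · -- 2 ≤ n
    have hn2' : 2 ≤ n := hn2
    by_cases hsmall : ∀ i, x i ≤ 1/2
    · have h := jensen_p j Finset.univ Finset.univ_nonempty x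
        (fun i _ => ⟨(hx i).1, hsmall i⟩)
      simpa [Finset.card_univ, hsum] using h
    · push_neg at hsmall
      obtain ⟨i₀, hi₀⟩ := hsmall
      set t := Finset.univ.erase i₀ with ht
      have hcardt : t.card = n - 1 := by
        rw [ht, Finset.card_erase_of_mem (Finset.mem_univ _), Finset.card_univ,
          Fintype.card_fin]
      have htne : t.Nonempty := Finset.card_pos.mp (by rw [hcardt]; omega)
      have hsplit : x i₀ + ∑ i ∈ t, x i = 1 := by
        rw [ht, Finset.add_sum_erase _ _ (Finset.mem_univ i₀)]; exact hsum
      set S := ∑ i ∈ t, x i with hSdef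
      have hS : S = 1 - x i₀ := by linarith
      have hS0 : 0 ≤ S := Finset.sum_nonneg (fun i _ => (hx i).1)
      have hS12 : S ≤ 1/2 := by rw [hS]; linarith
      have hxle : ∀ i ∈ t, x i ≤ S :=
        fun i hi => Finset.single_le_sum (fun i _ => (hx i).1) hi
      set N : ℝ := (n:ℝ) - 1 with hNdef
      have hN : 1 ≤ N := by
        have : (2:ℝ) ≤ n := by exact_mod_cast hn2'
        rw [hNdef]; linarith
      have hN0 : N ≠ 0 := by linarith
      have hcastN : ((n - 1 : ℕ) : ℝ) = N := by
        rw [hNdef, Nat.cast_sub hn]; norm_num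
      -- Jensen on the small variables
      have hJ1 := jensen_p j t htne x
        (fun i hi => ⟨(hx i).1, le_trans (hxle i hi) hS12⟩)
      rw [hcardt, hcastN, ← hSdef] at hJ1
      -- monotonicity step
      have hmono := g_mono j N hN (Set.mem_Icc.mpr ⟨le_refl _, by norm_num⟩)
        (Set.mem_Icc.mpr ⟨hi₀.le, (hx i₀).2⟩) hi₀.le
      simp only at hmono
      rw [← hS] at hmono
      -- Jensen on the configuration (1/2, s, ..., s)
      set z : Fin n → ℝ := fun i => if i = i₀ then 1/2 else 1/(2*N) with hzdef
      have hz1 : z i₀ = 1/2 := by rw [hzdef]; simp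
      have hz2 : ∀ i ∈ t, z i = 1/(2*N) := fun i hi => by
        rw [hzdef]; simp [Finset.ne_of_mem_erase hi]
      have hsz : ∑ i, z i = 1 := by
        rw [← Finset.add_sum_erase _ _ (Finset.mem_univ i₀), ← ht, hz1,
          Finset.sum_congr rfl hz2, Finset.sum_const, hcardt, nsmul_eq_mul, hcastN]
        field_simp
        ring
      have hsz2 : ∑ i, p (j+1) (z i) = p (j+1) (1/2) + N * p (j+1) (1/(2*N)) := by
        rw [← Finset.add_sum_erase _ _ (Finset.mem_univ i₀), ← ht, hz1]
        congr 1
        rw [Finset.sum_congr rfl (fun i hi => by rw [hz2 i hi]),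
          Finset.sum_const, hcardt, nsmul_eq_mul, hcastN]
      have hmem : ∀ i ∈ Finset.univ, z i ∈ Set.Icc (0:ℝ) (1/2) := by
        intro i _
        by_cases h : i = i₀
        · rw [hzdef]; simp only [if_pos h]
          constructor <;> norm_num
        · rw [hzdef]; simp only [if_neg h]
          constructor
          · positivity
          · rw [div_le_div_iff₀ (by linarith) (by norm_num)]; linarith
      have hJ2 := jensen_p j Finset.univ Finset.univ_nonempty z hmem
      rw [hsz, hsz2, Finset.card_univ, Fintype.card_fin] at hJ2
      -- chain everything
      have hhalf : (1 - 1/2 : ℝ)/N = 1/(2*N) := by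
        rw [div_eq_div_iff (by linarith) (by linarith)]; ring
      rw [hhalf] at hmono
      have hfinal : ∑ i, p (j+1) (x i) = p (j+1) (x i₀) + ∑ i ∈ t, p (j+1) (x i) := by
        rw [← Finset.add_sum_erase _ _ (Finset.mem_univ i₀), ← ht]
      rw [hfinal]
      calc (n:ℝ) * p (j+1) (1/n) ≤ p (j+1) (1/2) + N * p (j+1) (1/(2*N)) := hJ2
        _ ≤ p (j+1) (x i₀) + N * p (j+1) (S/N) := hmono
        _ ≤ p (j+1) (x i₀) + ∑ i ∈ t, p (j+1) (x i) := by linarith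
end

section
/- For k ≥ 1 and x_1,…,x_{2k-1} ∈ [0,1], σ_{k+1}(x_1,…,x_{2k-1}) ≤ σ_k(x_1,…,x_{2k-1})^{(k+1)/k}. -/
def esymm (m ℓ : ℕ) (x : Fin m → ℝ) : ℝ :=
  ∑ I ∈ Finset.powersetCard ℓ (Finset.univ : Finset (Fin m)), ∏ i ∈ I, x i

namespace EsymmAux

variable {n : ℕ}

/-- prefix count -/
def pc (A : Finset (Fin n)) (j : ℕ) : ℕ := (A.filter (fun i => i.val < j)).card

lemma pc_zero (A : Finset (Fin n)) : pc A 0 = 0 := by simp [pc]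

lemma pc_top (A : Finset (Fin n)) : pc A n = A.card := by
  rw [pc]
  congr 1
  apply Finset.filter_true_of_mem
  intro i _
  exact i.2

lemma pc_mono (A : Finset (Fin n)) (j : ℕ) : pc A j ≤ pc A (j + 1) := by
  apply Finset.card_le_card
  intro i hi
  simp only [Finset.mem_filter] at hi ⊢
  exact ⟨hi.1, by omega⟩

lemma pc_succ_le (A : Finset (Fin n)) (j : ℕ) : pc A (j + 1) ≤ pc A j + 1 := by
  have h : A.filter (fun i => i.val < j + 1)
      ⊆ A.filter (fun i => i.val < j) ∪ A.filter (fun i => i.val = j) := by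
    intro i hi
    simp only [Finset.mem_filter, Finset.mem_union] at hi ⊢
    obtain ⟨h1, h2⟩ := hi
    by_cases h3 : i.val < j
    · exact Or.inl ⟨h1, h3⟩
    · exact Or.inr ⟨h1, by omega⟩
  have h2 : (A.filter (fun i => i.val = j)).card ≤ 1 := by
    apply Finset.card_le_one.2
    intro a ha b hb
    simp only [Finset.mem_filter] at ha hb
    exact Fin.ext (by omega)
  calc pc A (j+1) ≤ (A.filter (fun i => i.val < j) ∪ A.filter (fun i => i.val = j)).card :=
        Finset.card_le_card h
    _ ≤ pc A j + (A.filter (fun i => i.val = j)).card := Finset.card_union_le _ _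
    _ ≤ pc A j + 1 := by omega

/-- prefix difference -/
def d (A B : Finset (Fin n)) (j : ℕ) : ℤ := (pc B j : ℤ) - (pc A j : ℤ)

lemma d_zero (A B : Finset (Fin n)) : d A B 0 = 0 := by simp [d, pc_zero]

lemma d_succ_le (A B : Finset (Fin n)) (j : ℕ) : d A B (j + 1) ≤ d A B j + 1 := by
  have h1 := pc_succ_le B j
  have h2 := pc_mono A j
  simp only [d]
  omega

lemma exists_one (A B : Finset (Fin n)) (h : B.card = A.card + 2) : ∃ j, d A B j = 1 := by
  by_contra hc
  push_neg at hc
  have key : ∀ j, d A B j ≤ 0 := by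
    intro j
    induction j with
    | zero => simp [d_zero]
    | succ j ih =>
      have h1 := d_succ_le A B j
      have h2 := hc (j + 1)
      omega
  have h3 := key n
  have h4 : d A B n = 2 := by simp [d, pc_top, h]
  omega

lemma le_zero_of_lt (A B : Finset (Fin n)) (J : ℕ) (hJ : ∀ m < J, d A B m ≠ 1) :
    ∀ m < J, d A B m ≤ 0 := by
  intro m
  induction m with
  | zero => intro _; simp [d_zero]
  | succ m ih =>
    intro hm
    have h1 := d_succ_le A B m
    have h2 := hJ (m + 1) hm
    have h3 := ih (by omega)
    omega

/-- swap: keep A below j, take B above j -/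
def sw (j : ℕ) (A B : Finset (Fin n)) : Finset (Fin n) :=
  A.filter (fun i => i.val < j) ∪ B.filter (fun i => ¬ i.val < j)

lemma mem_sw {j : ℕ} {A B : Finset (Fin n)} {i : Fin n} :
    i ∈ sw j A B ↔ (i ∈ A ∧ i.val < j) ∨ (i ∈ B ∧ ¬ i.val < j) := by
  simp [sw, Finset.mem_union, Finset.mem_filter]

lemma sw_sw (j : ℕ) (A B : Finset (Fin n)) : sw j (sw j A B) (sw j B A) = A := by
  ext i
  simp only [mem_sw]
  by_cases h : i.val < j <;> simp [h]

lemma prod_sw (x : Fin n → ℝ) (j : ℕ) (A B : Finset (Fin n)) :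
    (∏ i ∈ sw j A B, x i) * (∏ i ∈ sw j B A, x i) = (∏ i ∈ A, x i) * (∏ i ∈ B, x i) := by
  have hd : ∀ C D : Finset (Fin n), Disjoint (C.filter (fun i => i.val < j))
      (D.filter (fun i => ¬ i.val < j)) := by
    intro C D
    rw [Finset.disjoint_left]
    intro a ha hb
    simp only [Finset.mem_filter] at ha hb
    exact hb.2 ha.2
  rw [sw, sw, Finset.prod_union (hd A B), Finset.prod_union (hd B A),
    ← Finset.prod_filter_mul_prod_filter_not A (fun i => i.val < j) x,
    ← Finset.prod_filter_mul_prod_filter_not B (fun i => i.val < j) x]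
  ring

lemma card_sw (j : ℕ) (A B : Finset (Fin n)) :
    (sw j A B).card + pc B j = pc A j + B.card := by
  have hd : Disjoint (A.filter (fun i => i.val < j))
      (B.filter (fun i => ¬ i.val < j)) := by
    rw [Finset.disjoint_left]
    intro a ha hb
    simp only [Finset.mem_filter] at ha hb
    exact hb.2 ha.2
  have h1 : (sw j A B).card = pc A j + (B.filter (fun i => ¬ i.val < j)).card := by
    rw [sw, Finset.card_union_of_disjoint hd]; rfl
  have h2 : (B.filter (fun i => i.val < j)).card
      + (B.filter (fun i => ¬ i.val < j)).card = B.card := by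
    have := Finset.card_filter_add_card_filter_not
      (s := B) (p := fun i => i.val < j)
    simpa using this
  rw [h1]
  simp only [pc] at *
  omega

lemma pc_sw (j m : ℕ) (hm : m ≤ j) (A B : Finset (Fin n)) : pc (sw j A B) m = pc A m := by
  unfold pc
  congr 1
  ext i
  simp only [Finset.mem_filter, mem_sw]
  constructor
  · rintro ⟨⟨hA, hj⟩ | ⟨hB, hj⟩, hmi⟩
    · exact ⟨hA, hmi⟩
    · omega
  · rintro ⟨hA, hmi⟩
    exact ⟨Or.inl ⟨hA, by omega⟩, hmi⟩

lemma d_sw (j m : ℕ) (hm : m ≤ j) (A B : Finset (Fin n)) :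
    d (sw j A B) (sw j B A) m = d A B m := by
  simp [d, pc_sw j m hm]

end EsymmAux

open EsymmAux in
lemma esymm_newton (n ℓ : ℕ) (x : Fin n → ℝ) (hx : ∀ i, 0 ≤ x i) :
    esymm n ℓ x * esymm n (ℓ + 2) x ≤ esymm n (ℓ + 1) x * esymm n (ℓ + 1) x := by
  classical
  set S := (Finset.powersetCard ℓ (Finset.univ : Finset (Fin n))) ×ˢ
    (Finset.powersetCard (ℓ + 2) (Finset.univ : Finset (Fin n))) with hS
  set T := (Finset.powersetCard (ℓ + 1) (Finset.univ : Finset (Fin n))) ×ˢ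
    (Finset.powersetCard (ℓ + 1) (Finset.univ : Finset (Fin n))) with hT
  set F : Finset (Fin n) × Finset (Fin n) → ℝ :=
    fun p => (∏ i ∈ p.1, x i) * (∏ i ∈ p.2, x i) with hF
  have hFnonneg : ∀ p, 0 ≤ F p := by
    intro p
    exact mul_nonneg (Finset.prod_nonneg fun i _ => hx i) (Finset.prod_nonneg fun i _ => hx i)
  set Φ : Finset (Fin n) × Finset (Fin n) → Finset (Fin n) × Finset (Fin n) :=
    fun p => if h : ∃ j, d p.1 p.2 j = 1 then
      (sw (Nat.find h) p.1 p.2, sw (Nat.find h) p.2 p.1) else p with hΦ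
  have hcards : ∀ p ∈ S, p.1.card = ℓ ∧ p.2.card = ℓ + 2 := by
    intro p hp
    rw [hS, Finset.mem_product] at hp
    rw [Finset.mem_powersetCard] at hp
    exact ⟨hp.1.2, (Finset.mem_powersetCard.mp hp.2).2⟩
  have hexists : ∀ p ∈ S, ∃ j, d p.1 p.2 j = 1 := fun p hp =>
    exists_one p.1 p.2 (by have := hcards p hp; omega)
  have hΦval : ∀ (p : Finset (Fin n) × Finset (Fin n)) (h : ∃ j, d p.1 p.2 j = 1),
      Φ p = (sw (Nat.find h) p.1 p.2, sw (Nat.find h) p.2 p.1) := by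
    intro p h
    simp only [hΦ, dif_pos h]
  have hFΦ : ∀ p ∈ S, F (Φ p) = F p := by
    intro p hp
    rw [hΦval p (hexists p hp)]
    exact prod_sw x _ p.1 p.2
  have hmem : ∀ p ∈ S, Φ p ∈ T := by
    intro p hp
    obtain ⟨h1, h2⟩ := hcards p hp
    have hex := hexists p hp
    have hdj : d p.1 p.2 (Nat.find hex) = 1 := Nat.find_spec hex
    have hpcj : pc p.2 (Nat.find hex) = pc p.1 (Nat.find hex) + 1 := by
      rw [d] at hdj; omega
    have c1 := card_sw (Nat.find hex) p.1 p.2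
    have c2 := card_sw (Nat.find hex) p.2 p.1
    rw [hΦval p hex, hT]
    apply Finset.mk_mem_product
    · rw [Finset.mem_powersetCard]
      exact ⟨Finset.subset_univ _, by omega⟩
    · rw [Finset.mem_powersetCard]
      exact ⟨Finset.subset_univ _, by omega⟩
  have himg : ∀ p ∈ S, ∀ (hex : ∃ j, d p.1 p.2 j = 1),
      d (Φ p).1 (Φ p).2 (Nat.find hex) = 1 := by
    intro p hp hex
    rw [hΦval p hex]
    show d (sw (Nat.find hex) p.1 p.2) (sw (Nat.find hex) p.2 p.1) (Nat.find hex) = 1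
    rw [d_sw _ _ le_rfl]
    exact Nat.find_spec hex
  have hfind : ∀ p ∈ S, ∀ (hex : ∃ j, d p.1 p.2 j = 1)
      (hex' : ∃ m, d (Φ p).1 (Φ p).2 m = 1), Nat.find hex' = Nat.find hex := by
    intro p hp hex hex'
    rw [Nat.find_eq_iff]
    constructor
    · exact himg p hp hex
    · intro m hm
      rw [hΦval p hex]
      show ¬ d (sw (Nat.find hex) p.1 p.2) (sw (Nat.find hex) p.2 p.1) m = 1
      rw [d_sw _ _ (le_of_lt hm)]
      have := le_zero_of_lt p.1 p.2 (Nat.find hex)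
        (fun m' hm' => Nat.find_min hex hm') m hm
      omega
  have hrec : ∀ p ∈ S, ∀ r, Φ p = r → ∀ (hex' : ∃ m, d r.1 r.2 m = 1),
      p = (sw (Nat.find hex') r.1 r.2, sw (Nat.find hex') r.2 r.1) := by
    intro p hp r hr hex'
    subst hr
    have hex := hexists p hp
    rw [hfind p hp hex hex', hΦval p hex]
    show p = (sw (Nat.find hex) (sw (Nat.find hex) p.1 p.2) (sw (Nat.find hex) p.2 p.1),
      sw (Nat.find hex) (sw (Nat.find hex) p.2 p.1) (sw (Nat.find hex) p.1 p.2))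
    rw [sw_sw, sw_sw]
  have hinj : ∀ p ∈ S, ∀ q ∈ S, Φ p = Φ q → p = q := by
    intro p hp q hq heq
    have hexq : ∃ m, d (Φ q).1 (Φ q).2 m = 1 :=
      ⟨Nat.find (hexists q hq), himg q hq (hexists q hq)⟩
    rw [hrec p hp (Φ q) heq hexq]
    exact (hrec q hq (Φ q) rfl hexq).symm
  have hsum1 : esymm n ℓ x * esymm n (ℓ + 2) x = ∑ p ∈ S, F p := by
    rw [esymm, esymm, Finset.sum_mul_sum, hS, Finset.sum_product]
  have hsum2 : esymm n (ℓ + 1) x * esymm n (ℓ + 1) x = ∑ p ∈ T, F p := by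
    rw [esymm, Finset.sum_mul_sum, hT, Finset.sum_product]
  rw [hsum1, hsum2]
  calc ∑ p ∈ S, F p = ∑ p ∈ S, F (Φ p) :=
        Finset.sum_congr rfl (fun p hp => (hFΦ p hp).symm)
    _ = ∑ q ∈ S.image Φ, F q :=
        (Finset.sum_image fun p hp q hq h => hinj p hp q hq h).symm
    _ ≤ ∑ q ∈ T, F q := Finset.sum_le_sum_of_subset_of_nonneg
        (Finset.image_subset_iff.mpr hmem) (fun q _ _ => hFnonneg q)

lemma esymm_nonneg (n ℓ : ℕ) (x : Fin n → ℝ) (hx : ∀ i, 0 ≤ x i) : 0 ≤ esymm n ℓ x :=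
  Finset.sum_nonneg fun I _ => Finset.prod_nonneg fun i _ => hx i

lemma esymm_zero_eq_one (n : ℕ) (x : Fin n → ℝ) : esymm n 0 x = 1 := by
  simp [esymm]

lemma esymm_zero_succ (n ℓ : ℕ) (x : Fin n → ℝ) (hx : ∀ i, 0 ≤ x i)
    (h : esymm n ℓ x = 0) : esymm n (ℓ + 1) x = 0 := by
  classical
  have hall : ∀ I ∈ Finset.powersetCard ℓ (Finset.univ : Finset (Fin n)),
      (∏ i ∈ I, x i) = 0 := by
    rw [esymm] at h
    exact (Finset.sum_eq_zero_iff_of_nonneg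
      (fun I _ => Finset.prod_nonneg fun i _ => hx i)).mp h
  rw [esymm]
  apply Finset.sum_eq_zero
  intro J hJ
  have hJc : J.card = ℓ + 1 := (Finset.mem_powersetCard.mp hJ).2
  have hJne : J.Nonempty := Finset.card_pos.mp (by omega)
  obtain ⟨i, hi⟩ := hJne
  rw [← Finset.mul_prod_erase J x hi]
  have herase : (∏ j ∈ J.erase i, x j) = 0 := by
    apply hall
    rw [Finset.mem_powersetCard]
    refine ⟨Finset.subset_univ _, ?_⟩
    rw [Finset.card_erase_of_mem hi, hJc]
    omega
  rw [herase, mul_zero]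

lemma esymm_chain (n : ℕ) (x : Fin n → ℝ) (hx : ∀ i, 0 ≤ x i) :
    ∀ k : ℕ, (esymm n (k + 1) x) ^ k ≤ (esymm n k x) ^ (k + 1) := by
  intro k
  induction k with
  | zero => simp [esymm_zero_eq_one]
  | succ k ih =>
    rcases eq_or_lt_of_le (esymm_nonneg n (k + 1) x hx) with h0 | hpos
    · have h2 : esymm n (k + 2) x = 0 := esymm_zero_succ n (k + 1) x hx h0.symm
      rw [h2, ← h0]
      rw [zero_pow (by omega), zero_pow (by omega)]
    · have hnewton := esymm_newton n k x hx
      have hnn2 := esymm_nonneg n (k + 2) x hx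
      have hnn0 := esymm_nonneg n k x hx
      have key : (esymm n (k + 2) x) ^ (k + 1) * (esymm n (k + 1) x) ^ k
          ≤ (esymm n (k + 1) x) ^ (k + 2) * (esymm n (k + 1) x) ^ k := by
        calc (esymm n (k + 2) x) ^ (k + 1) * (esymm n (k + 1) x) ^ k
            ≤ (esymm n (k + 2) x) ^ (k + 1) * (esymm n k x) ^ (k + 1) :=
              mul_le_mul_of_nonneg_left ih (pow_nonneg hnn2 _)
          _ = (esymm n k x * esymm n (k + 2) x) ^ (k + 1) := by ring
          _ ≤ (esymm n (k + 1) x * esymm n (k + 1) x) ^ (k + 1) :=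
              pow_le_pow_left₀ (mul_nonneg hnn0 hnn2) hnewton _
          _ = (esymm n (k + 1) x) ^ (k + 2) * (esymm n (k + 1) x) ^ k := by ring
      exact le_of_mul_le_mul_right key (pow_pos hpos k)

theorem esymm_succ_le_rpow (k : ℕ) (hk : 1 ≤ k) (x : Fin (2*k-1) → ℝ)
    (hx : ∀ i, x i ∈ Set.Icc (0:ℝ) 1) :
    esymm (2*k-1) (k+1) x ≤ (esymm (2*k-1) k x) ^ (((k:ℝ)+1)/(k:ℝ)) := by
  have hx0 : ∀ i, 0 ≤ x i := fun i => (hx i).1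
  set a := esymm (2*k-1) k x with ha
  set b := esymm (2*k-1) (k+1) x with hb
  have hann : 0 ≤ a := esymm_nonneg _ _ _ hx0
  have hbnn : 0 ≤ b := esymm_nonneg _ _ _ hx0
  have hchain : b ^ k ≤ a ^ (k + 1) := esymm_chain _ x hx0 k
  have hkpos : (0:ℝ) < (k:ℝ) := by exact_mod_cast hk
  have h1 : b = ((b ^ k : ℝ)) ^ (1 / (k:ℝ) : ℝ) := by
    rw [← Real.rpow_natCast b k, ← Real.rpow_mul hbnn]
    rw [mul_one_div, div_self (ne_of_gt hkpos), Real.rpow_one]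
  have h2 : ((a ^ (k+1) : ℝ)) ^ (1 / (k:ℝ) : ℝ) = a ^ (((k:ℝ)+1)/(k:ℝ)) := by
    rw [← Real.rpow_natCast a (k+1), ← Real.rpow_mul hann]
    congr 1
    push_cast
    field_simp
  calc b = ((b ^ k : ℝ)) ^ (1 / (k:ℝ) : ℝ) := h1
    _ ≤ ((a ^ (k+1) : ℝ)) ^ (1 / (k:ℝ) : ℝ) :=
        Real.rpow_le_rpow (pow_nonneg hbnn _) hchain (by positivity)
    _ = a ^ (((k:ℝ)+1)/(k:ℝ)) := h2
end
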